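/- Let A be a finite-dimensional unital associative F-algebra that is splitting over F, i.e., every finite-dimensional irreducible (simple) A-module S satisfies dim_F End_A(S) = 1. Then every finite-dimensional irreducible A-module is zero action determined. -/

import Mathlib

/-- A unital left `A`-module `V` (with compatible `F`-vector space structure) is
*zero action determined* (zad) if every `F`-bilinear map `f : A × V → F` vanishing on
pairs with zero action is of the form `f(x, v) = Φ(x • v)` for some linear `Φ`. -/
def IsZad (F A V : Type*) [Field F] [Ring A] [Algebra F A]
    [AddCommGroup V] [Module F V] [Module A V] [IsScalarTower F A V] : Prop :=
  ∀ f : A →ₗ[F] V →ₗ[F] F,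
    (∀ (a : A) (m : V), a • m = 0 → f a m = 0) →
    ∃ Φ : V →ₗ[F] F, ∀ (x : A) (v : V), f x v = Φ (x • v)
universe u

/-- over a finite-dimensional splitting algebra, every finite-dimensional
irreducible module is zad. -/
theorem stmt_11 (F : Type*) (A : Type u) [Field F] [Ring A] [Algebra F A]
    [FiniteDimensional F A]
    (hsplit : ∀ (S : Type u) [AddCommGroup S] [Module F S] [Module A S] [IsScalarTower F A S],
      IsSimpleModule A S → FiniteDimensional F S → Module.finrank F (S →ₗ[A] S) = 1) :
    ∀ (V : Type u) [AddCommGroup V] [Module F V] [Module A V] [IsScalarTower F A V],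
      IsSimpleModule A V → FiniteDimensional F V → IsZad F A V := by
  intro V _ _ _ _ hV hfin f hf
  classical
  -- surjectivity of the action on a nonzero vector
  have spanlem : ∀ m : V, m ≠ 0 → ∀ w : V, ∃ a : A, a • m = w := by
    intro m hm w
    have hsp : Submodule.span A ({m} : Set V) = ⊤ := by
      rcases hV.eq_bot_or_eq_top (Submodule.span A ({m} : Set V)) with h | h
      · exact absurd (h ▸ Submodule.mem_span_singleton_self m) (by simpa using hm)
      · exact h
    have : w ∈ Submodule.span A ({m} : Set V) := hsp ▸ Submodule.mem_top
    exact Submodule.mem_span_singleton.mp this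
  -- the action map as an F-linear map
  let act : V → (A →ₗ[F] V) := fun m =>
    { toFun := fun a => a • m
      map_add' := fun a b => add_smul a b m
      map_smul' := fun c a => smul_assoc c a m }
  -- existence of g_m
  have key : ∀ m : V, m ≠ 0 → ∃ g : V →ₗ[F] F, ∀ a : A, g (a • m) = f a m := by
    intro m hm
    have hsurj : LinearMap.range (act m) = ⊤ := by
      rw [LinearMap.range_eq_top]
      intro w
      obtain ⟨a, ha⟩ := spanlem m hm w
      exact ⟨a, ha⟩
    obtain ⟨σ, hσ⟩ := (act m).exists_rightInverse_of_surjective hsurj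
    refine ⟨(f.flip m).comp σ, fun a => ?_⟩
    have h1 : (σ (a • m) - a) • m = 0 := by
      have h2 : (act m) (σ (a • m)) = a • m := by
        have := congrArg (fun g => g (a • m)) hσ
        simpa using this
      have : (σ (a • m)) • m = a • m := h2
      rw [sub_smul, this, sub_self]
    have h3 : f (σ (a • m) - a) m = 0 := hf _ _ h1
    have h4 : f (σ (a • m)) m - f a m = 0 := by
      rw [← h3]; simp
    simp only [LinearMap.comp_apply, LinearMap.flip_apply]
    exact sub_eq_zero.mp h4
  -- density lemma
  have dens : ∀ m n : V, m ≠ 0 → (∀ c : F, n ≠ c • m) → ∀ w : V,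
      ∃ a : A, a • m = w ∧ a • n = 0 := by
    intro m n hm hn w
    set π := (LinearMap.toSpanSingleton A V m).prod (LinearMap.toSpanSingleton A V n) with hπ
    set W := LinearMap.range π with hW
    have hmemW : ∀ a : A, (a • m, a • n) ∈ W := fun a => ⟨a, rfl⟩
    -- U₂ = {v | (0, v) ∈ W}
    set U₂ := W.comap (LinearMap.inr A V V) with hU₂
    rcases hV.eq_bot_or_eq_top U₂ with h2 | h2
    · -- build an A-endomorphism sending m to n, contradiction
      exfalso
      have hker : LinearMap.ker (LinearMap.toSpanSingleton A V m) ≤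
          LinearMap.ker (LinearMap.toSpanSingleton A V n) := by
        intro a ha
        have ham : a • m = 0 := ha
        have : ((0 : V), a • n) ∈ W := by
          have := hmemW a
          rwa [ham] at this
        have : a • n ∈ U₂ := this
        rw [h2] at this
        simpa using this
      have hsurjm : Function.Surjective (LinearMap.toSpanSingleton A V m) := by
        intro w'
        obtain ⟨a, ha⟩ := spanlem m hm w'
        exact ⟨a, ha⟩
      let e := (LinearMap.toSpanSingleton A V m).quotKerEquivOfSurjective hsurjm
      let φ : V →ₗ[A] V :=
        ((LinearMap.ker (LinearMap.toSpanSingleton A V m)).liftQ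
          (LinearMap.toSpanSingleton A V n) hker).comp e.symm.toLinearMap
      have hφm : φ m = n := by
        have h1 : e (Submodule.Quotient.mk (1 : A)) = m := by
          simp [e, LinearMap.quotKerEquivOfSurjective]
        have h2 : e.symm m = Submodule.Quotient.mk (1 : A) := by
          rw [LinearEquiv.symm_apply_eq]; exact h1.symm
        simp [φ, h2]
      -- endomorphisms are scalars
      have hrank : Module.finrank F (V →ₗ[A] V) = 1 := hsplit V hV hfin
      have hidne : (LinearMap.id : V →ₗ[A] V) ≠ 0 := by
        intro h
        have := congrArg (fun g => g m) h
        simp at this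
        exact hm this
      obtain ⟨c, hc⟩ := (finrank_eq_one_iff_of_nonzero' (LinearMap.id : V →ₗ[A] V) hidne).mp hrank φ
      have : n = c • m := by
        rw [← hφm, ← hc]
        simp
      exact hn c this
    · -- U₂ = ⊤ : (0, v) ∈ W for all v, hence (w, 0) ∈ W
      have h0n : ((0 : V), n) ∈ W := by
        have : n ∈ U₂ := h2 ▸ Submodule.mem_top
        exact this
      have hm0 : (m, (0 : V)) ∈ W := by
        have := W.sub_mem (hmemW 1) h0n
        simpa using this
      set U₁ := W.comap (LinearMap.inl A V V) with hU₁
      have h1 : U₁ = ⊤ := by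
        rcases hV.eq_bot_or_eq_top U₁ with h | h
        · exfalso
          have : m ∈ U₁ := hm0
          rw [h] at this
          exact hm (by simpa using this)
        · exact h
      have hw0 : ((w : V), (0 : V)) ∈ W := by
        have : w ∈ U₁ := h1 ▸ Submodule.mem_top
        exact this
      obtain ⟨a, ha⟩ := hw0
      have ham : a • m = w := congrArg Prod.fst ha
      have han : a • n = 0 := congrArg Prod.snd ha
      exact ⟨a, ham, han⟩
  -- g's agree
  have scomm : ∀ (c : F) (a : A) (v : V), a • (c • v) = c • (a • v) := by
    intro c a v
    rw [← algebraMap_smul A c v, ← mul_smul, ← Algebra.commutes, mul_smul, algebraMap_smul]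
  have eqg : ∀ (m n : V) (gm gn : V →ₗ[F] F), m ≠ 0 → n ≠ 0 →
      (∀ a : A, gm (a • m) = f a m) → (∀ a : A, gn (a • n) = f a n) →
      ∀ w : V, gm w = gn w := by
    intro m n gm gn hm hn hgm hgn w
    by_cases hdep : ∃ c : F, n = c • m
    · obtain ⟨c, rfl⟩ := hdep
      have hc : c ≠ 0 := by
        rintro rfl; exact hn (zero_smul F m)
      obtain ⟨a, ha⟩ := spanlem m hm w
      have hsc : (c⁻¹ • a) • (c • m) = w := by
        rw [smul_assoc, scomm, smul_smul, inv_mul_cancel₀ hc, one_smul, ha]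
      calc gm w = f a m := by rw [← ha, hgm]
        _ = gn w := by
            rw [← hsc, hgn, map_smul, map_smul, LinearMap.smul_apply, smul_smul,
              mul_inv_cancel₀ hc, one_smul]
    · push_neg at hdep
      have hnm : ∀ c : F, m ≠ c • n := by
        intro c hcm
        have hc : c ≠ 0 := by rintro rfl; rw [zero_smul] at hcm; exact hm hcm
        exact hdep c⁻¹ (by rw [hcm, smul_smul, inv_mul_cancel₀ hc, one_smul])
      have hp : m + n ≠ 0 := by
        intro h
        exact hdep (-1) (by rw [neg_one_smul]; exact eq_neg_of_add_eq_zero_right h)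
      obtain ⟨gp, hgp⟩ := key (m + n) hp
      obtain ⟨a, ham, han⟩ := dens m n hm hdep w
      obtain ⟨b, hbn, hbm⟩ := dens n m hn hnm w
      have e1 : gm w = gp w := by
        have : f a m = f a (m + n) := by
          rw [map_add, hf a n han, add_zero]
        rw [← ham, hgm, this, ← hgp a]
        congr 1
        rw [smul_add, ham, han, add_zero]
      have e2 : gn w = gp w := by
        have : f b n = f b (m + n) := by
          rw [map_add, hf b m hbm, zero_add]
        rw [← hbn, hgn, this, ← hgp b]
        congr 1
        rw [smul_add, hbn, hbm, zero_add]
      rw [e1, e2]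
  -- assemble
  have : Nontrivial V := IsSimpleModule.nontrivial A V
  obtain ⟨v₀, hv₀⟩ := exists_ne (0 : V)
  obtain ⟨Φ, hΦ⟩ := key v₀ hv₀
  refine ⟨Φ, fun x v => ?_⟩
  by_cases hv : v = 0
  · subst hv; simp
  · obtain ⟨g, hg⟩ := key v hv
    rw [← hg x]
    exact eqg v v₀ g Φ hv hv₀ hg hΦ (x • v)
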